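/- Let n ≥ 2 and let λ₁, …, λₙ be real numbers. Let M = max{λ₁, …, λₙ} and m = min{λ₁, …, λₙ}. Then ((λ₁ + ⋯ + λₙ)/n)² ≤ (2·(λ₁² + ⋯ + λₙ²) − (M − m)²)/(2n). -/
import Mathlib


/-- The key extrinsic estimate `H² ≤ (2‖h‖² − s²(L))/(2n)`, expressed purely in terms of
the eigenvalues `λ₁, …, λₙ` of the shape operator. -/
theorem mean_curv_sq_le (n : ℕ) (hn : 2 ≤ n) (l : Fin n → ℝ) (M m : ℝ)
    (hM : IsGreatest (Set.range l) M) (hm : IsLeast (Set.range l) m) :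
    ((∑ i, l i) / (n : ℝ)) ^ 2 ≤ (2 * (∑ i, (l i) ^ 2) - (M - m) ^ 2) / (2 * (n : ℝ)) := by
  obtain ⟨⟨i, hi⟩, hMub⟩ := hM
  obtain ⟨⟨j, hj⟩, hmlb⟩ := hm
  have hn0 : (0:ℝ) < n := by positivity
  have hn2 : (2:ℝ) ≤ n := by exact_mod_cast hn
  have key : (n:ℝ) * (M - m)^2 + 2 * (∑ k, l k)^2 ≤ 2 * n * (∑ k, (l k)^2) := by
    rcases eq_or_lt_of_le (hmlb ⟨i, hi⟩) with heq | hlt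
    · -- m = M : use plain Cauchy-Schwarz
      have cs : (∑ k, l k)^2 ≤ (n:ℝ) * ∑ k, (l k)^2 := by
        have := sq_sum_le_card_mul_sum_sq (s := (Finset.univ : Finset (Fin n))) (f := l)
        simpa using this
      have hMm : M - m = 0 := sub_eq_zero.mpr heq.symm
      rw [hMm]
      nlinarith [cs]
    · have hij : j ≠ i := by
        intro h; rw [h, hi] at hj; rw [hj] at hlt; exact lt_irrefl m hlt
      set s : Finset (Fin n) := (Finset.univ.erase i).erase j with hs
      have hjmem : j ∈ Finset.univ.erase i := Finset.mem_erase.mpr ⟨hij, Finset.mem_univ j⟩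
      have hsplit : ∀ f : Fin n → ℝ, ∑ k, f k = f i + f j + ∑ k ∈ s, f k := by
        intro f
        rw [← Finset.add_sum_erase _ f (Finset.mem_univ i),
          ← Finset.add_sum_erase _ f hjmem]
        ring
      have hcard : ((s.card : ℝ)) = (n:ℝ) - 2 := by
        have h1 : s.card = n - 2 := by
          rw [hs, Finset.card_erase_of_mem hjmem, Finset.card_erase_of_mem (Finset.mem_univ i)]
          simp [Finset.card_univ]; omega
        rw [h1]
        push_cast [Nat.cast_sub hn]
        ring
      set T1 : ℝ := ∑ k ∈ s, (l k - (M + m) / 2) with hT1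
      set T2 : ℝ := ∑ k ∈ s, (l k - (M + m) / 2)^2 with hT2
      have cs : T1^2 ≤ ((n:ℝ) - 2) * T2 := by
        have := sq_sum_le_card_mul_sum_sq (s := s) (f := fun k => l k - (M + m) / 2)
        rw [← hcard]
        exact_mod_cast this
      have hT2nn : 0 ≤ T2 := Finset.sum_nonneg fun k _ => sq_nonneg _
      have e1 : ∑ k ∈ s, l k = T1 + ((n:ℝ) - 2) * ((M + m) / 2) := by
        rw [hT1, Finset.sum_sub_distrib, Finset.sum_const, nsmul_eq_mul, hcard]; ring
      have e2 : ∑ k ∈ s, (l k)^2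
          = T2 + 2 * ((M + m) / 2) * (∑ k ∈ s, l k) - ((n:ℝ) - 2) * ((M + m) / 2)^2 := by
        rw [hT2]
        have h2 : ∀ k ∈ s, (l k - (M + m) / 2)^2
            = (l k)^2 - 2 * ((M + m) / 2) * l k + ((M + m) / 2)^2 := by intros; ring
        rw [Finset.sum_congr rfl h2, Finset.sum_add_distrib, Finset.sum_sub_distrib,
          Finset.sum_const, nsmul_eq_mul, hcard, Finset.mul_sum]
        ring
      rw [hsplit l, hsplit (fun k => (l k)^2), hi, hj, e1, e2, e1]
      nlinarith [cs, hT2nn, hn2]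
  rw [div_pow, div_le_div_iff₀ (by positivity) (by positivity)]
  nlinarith [mul_le_mul_of_nonneg_left key hn0.le]
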